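/- For every nonzero c ∈ ℂ and any a ∈ ℂ with a⁶ = c⁻¹, the ℂ-algebra map (x,y,z,t) ↦ (a⁶x, a⁻⁶y, a³z, a²t) induces an isomorphism ℂ[x,y,z,t]/(x²y+z²+x+t³-c) ≅ ℂ[x,y,z,t]/(x²y+z²+x+t³-1). -/

import Mathlib

open MvPolynomial

/-- P = x²y + z² + x + t³ -/
noncomputable def KRP : MvPolynomial (Fin 4) ℂ :=
  X 0 ^ 2 * X 1 + X 2 ^ 2 + X 0 + X 3 ^ 3

noncomputable def krScale (a : ℂ) (ha : a ≠ 0) :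
    MvPolynomial (Fin 4) ℂ ≃ₐ[ℂ] MvPolynomial (Fin 4) ℂ :=
  AlgEquiv.ofAlgHom
    (aeval ![C (a ^ 6) * X 0, C (a⁻¹ ^ 6) * X 1, C (a ^ 3) * X 2, C (a ^ 2) * X 3])
    (aeval ![C (a⁻¹ ^ 6) * X 0, C (a ^ 6) * X 1, C (a⁻¹ ^ 3) * X 2, C (a⁻¹ ^ 2) * X 3])
    (by
      apply algHom_ext
      intro i
      fin_cases i <;>
        · simp only [Fin.zero_eta, Fin.mk_one, AlgHom.comp_apply, aeval_X, AlgHom.id_apply,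
            Fin.isValue, Matrix.cons_val_zero, Matrix.cons_val_one, Matrix.head_cons,
            Matrix.cons_val_two, Matrix.tail_cons, Matrix.cons_val_three,
            map_mul, aeval_C, algebraMap_eq, show (⟨2,by norm_num⟩ : Fin 4) = 2 from rfl,
            show (⟨3,by norm_num⟩ : Fin 4) = 3 from rfl]
          rw [← mul_assoc, ← C_mul, ← mul_pow]
          simp [inv_mul_cancel₀ ha, mul_inv_cancel₀ ha])
    (by
      apply algHom_ext
      intro i
      fin_cases i <;>
        · simp only [Fin.zero_eta, Fin.mk_one, AlgHom.comp_apply, aeval_X, AlgHom.id_apply,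
            Fin.isValue, Matrix.cons_val_zero, Matrix.cons_val_one, Matrix.head_cons,
            Matrix.cons_val_two, Matrix.tail_cons, Matrix.cons_val_three,
            map_mul, aeval_C, algebraMap_eq, show (⟨2,by norm_num⟩ : Fin 4) = 2 from rfl,
            show (⟨3,by norm_num⟩ : Fin 4) = 3 from rfl]
          rw [← mul_assoc, ← C_mul, ← mul_pow]
          simp [inv_mul_cancel₀ ha, mul_inv_cancel₀ ha])

theorem stmt5 (c a : ℂ) (hc : c ≠ 0) (ha : a ^ 6 = c⁻¹) :
    ∃ e : (MvPolynomial (Fin 4) ℂ ⧸ Ideal.span {KRP - C 1}) ≃ₐ[ℂ]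
        (MvPolynomial (Fin 4) ℂ ⧸ Ideal.span {KRP - C c}),
      ∀ f : MvPolynomial (Fin 4) ℂ,
        e (Ideal.Quotient.mk _ f) =
          Ideal.Quotient.mk _
            (aeval ![C (a ^ 6) * X 0, C (a⁻¹ ^ 6) * X 1, C (a ^ 3) * X 2, C (a ^ 2) * X 3] f) := by
  have ha0 : a ≠ 0 := by
    intro h
    rw [h] at ha
    exact hc (by simpa using (congrArg Inv.inv ha).symm)
  have h1 : (C a : MvPolynomial (Fin 4) ℂ) ^ 12 * C a⁻¹ ^ 6 = C a ^ 6 := by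
    rw [← C_pow, ← C_pow, ← C_pow, ← C_mul]
    congr 1
    field_simp
  have h4 : (C a : MvPolynomial (Fin 4) ℂ) ^ 6 * C c = C 1 := by
    rw [← C_pow, ← C_mul, ha, inv_mul_cancel₀ hc]
  have key : (krScale a ha0) (KRP - C 1) = C (a ^ 6) * (KRP - C c) := by
    show (aeval ![C (a ^ 6) * X 0, C (a⁻¹ ^ 6) * X 1, C (a ^ 3) * X 2, C (a ^ 2) * X 3])
        (KRP - C 1) = _
    rw [map_sub, aeval_C, algebraMap_eq]
    simp only [KRP, map_add, map_mul, map_pow, aeval_X, Fin.isValue,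
      Matrix.cons_val_zero, Matrix.cons_val_one, Matrix.head_cons,
      Matrix.cons_val_two, Matrix.tail_cons, Matrix.cons_val_three]
    linear_combination (X 0 ^ 2 * X 1 : MvPolynomial (Fin 4) ℂ) * h1 + h4
  have hmap : Ideal.span {KRP - C c} =
      (Ideal.span {KRP - C 1}).map ((krScale a ha0 : MvPolynomial (Fin 4) ℂ ≃ₐ[ℂ]
        MvPolynomial (Fin 4) ℂ) : MvPolynomial (Fin 4) ℂ →+* MvPolynomial (Fin 4) ℂ) := by
    rw [Ideal.map_span, Set.image_singleton]
    show _ = Ideal.span {(krScale a ha0) (KRP - C 1)}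
    rw [key, Ideal.span_singleton_mul_left_unit]
    exact (isUnit_iff_ne_zero.mpr (pow_ne_zero 6 ha0)).map (C : ℂ →+* MvPolynomial (Fin 4) ℂ)
  refine ⟨Ideal.quotientEquivAlg _ _ (krScale a ha0) hmap, fun f => ?_⟩
  rfl
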